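/- (Einstein synchronization) Let n ≥ 2, let v ∈ ℝⁿ be timelike (η(v,v) > 0), let p, q ∈ ℝⁿ, and let s₊, s₋ > 0 be such that the points q₊ := q + s₊•v and q₋ := q − s₋•v both lie on the light cone of p, i.e. η(q₊ − p, q₊ − p) = 0 and η(q₋ − p, q₋ − p) = 0. Then: (i) η(q − p, q − p) = − s₊·s₋·η(v,v), i.e. the squared Minkowski norm of q − p equals the product of the Minkowski lengths of the segments q₊ − q and q − q₋; and (ii) s₊ = s₋ if and only if η(q − p, v) = 0, i.e. q is the midpoint of the segment from q₋ to q₊ exactly when q − p is Minkowski-orthogonal to v. -/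

import Mathlib

noncomputable section

/-- The Minkowski bilinear form on `ℝⁿ`:
`η(v,w) = v₀ w₀ − ∑_{i≠0} vᵢ wᵢ`. -/
def eta {n : ℕ} [NeZero n] (v w : Fin n → ℝ) : ℝ :=
  v 0 * w 0 - ∑ i ∈ Finset.univ.erase 0, v i * w i

end

lemma eta_add_left {n : ℕ} [NeZero n] (a b w : Fin n → ℝ) :
    eta (a + b) w = eta a w + eta b w := by
  simp [eta, add_mul, Finset.sum_add_distrib]; ring

lemma eta_smul_left {n : ℕ} [NeZero n] (s : ℝ) (a w : Fin n → ℝ) :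
    eta (s • a) w = s * eta a w := by
  simp only [eta, Pi.smul_apply, smul_eq_mul, mul_sub, Finset.mul_sum, mul_assoc]

lemma eta_comm {n : ℕ} [NeZero n] (a w : Fin n → ℝ) :
    eta a w = eta w a := by
  simp [eta, mul_comm]

lemma eta_add_right {n : ℕ} [NeZero n] (a b w : Fin n → ℝ) :
    eta w (a + b) = eta w a + eta w b := by
  rw [eta_comm, eta_add_left, eta_comm a, eta_comm b]

lemma eta_smul_right {n : ℕ} [NeZero n] (s : ℝ) (a w : Fin n → ℝ) :
    eta w (s • a) = s * eta w a := by
  rw [eta_comm, eta_smul_left, eta_comm]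

/-- **Einstein synchronization**: if `q + sp • v` and `q - sm • v` lie on the
light cone of `p` (with `sp, sm > 0` and `v` timelike), then
`η(q−p, q−p) = −sp·sm·η(v,v)`, and `sp = sm` iff `q − p` is
Minkowski-orthogonal to `v`. -/
theorem einstein_synchronization {n : ℕ} [NeZero n] (hn : 2 ≤ n)
    (v p q : Fin n → ℝ) (hv : 0 < eta v v)
    (sp sm : ℝ) (hsp : 0 < sp) (hsm : 0 < sm)
    (hplus : eta (q + sp • v - p) (q + sp • v - p) = 0)
    (hminus : eta (q - sm • v - p) (q - sm • v - p) = 0) :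
    eta (q - p) (q - p) = -(sp * sm * eta v v) ∧
    (sp = sm ↔ eta (q - p) v = 0) := by
  have e1 : q + sp • v - p = (q - p) + sp • v := by ring_nf
  have e2 : q - sm • v - p = (q - p) + (-sm) • v := by
    funext i; simp; ring
  rw [e1] at hplus
  rw [e2] at hminus
  set u := q - p
  rw [eta_add_left, eta_add_right, eta_add_right, eta_smul_left, eta_smul_right,
    eta_smul_left, eta_smul_right, eta_comm v u] at hplus
  rw [eta_add_left, eta_add_right, eta_add_right, eta_smul_left, eta_smul_right,
    eta_smul_left, eta_smul_right, eta_comm v u] at hminus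
  have huv : eta u v = -(sp - sm) * eta v v / 2 := by
    have hsum : 0 < sp + sm := by linarith
    field_simp
    nlinarith [hplus, hminus]
  constructor
  · nlinarith [hplus, hminus, huv]
  · constructor
    · intro h; rw [huv, h]; ring
    · intro h
      rw [h] at huv
      have := hv.ne'
      have : sp - sm = 0 := by
        by_contra hne
        apply hne
        field_simp at huv
        rcases mul_eq_zero.mp (by linarith : (sp - sm) * eta v v = 0) with h1 | h1
        · linarith
        · exact absurd h1 hv.ne'
      linarith
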